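/- Suppose G is a 3-uniform hypergraph on vertex set [n] in which every vertex is contained in at most R hyperedges, and the total number of pairs of hyperedges sharing at least one vertex is C₂. Consider the process: while some vertex is contained in g ≥ 2 hyperedges, delete that vertex (and all hyperedges containing it). Then the total number of hyperedges deleted throughout the process is at most 2·C₂. -/

import Mathlib

/-- Delete from the hypergraph `G` all hyperedges containing the vertex `v`. -/
def deleteVertex {n : ℕ} (G : Finset (Finset (Fin n))) (v : Fin n) :
    Finset (Finset (Fin n)) :=
  G.filter fun e => v ∉ e

/-- Run the deletion process along a list of chosen vertices. -/
def runProcess {n : ℕ} (G : Finset (Finset (Fin n))) :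
    List (Fin n) → Finset (Finset (Fin n))
  | [] => G
  | v :: l => runProcess (deleteVertex G v) l

/-- The process is valid: each chosen vertex is, at the moment it is chosen,
contained in at least 2 of the currently remaining hyperedges. -/
def ValidProcess {n : ℕ} (G : Finset (Finset (Fin n))) : List (Fin n) → Prop
  | [] => True
  | v :: l => 2 ≤ (G.filter fun e => v ∈ e).card ∧ ValidProcess (deleteVertex G v) l

/-- The set of ordered intersecting pairs of distinct hyperedges. -/
def pairsSet {n : ℕ} (G : Finset (Finset (Fin n))) :
    Finset (Finset (Fin n) × Finset (Fin n)) :=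
  (G ×ˢ G).filter fun p => p.1 ≠ p.2 ∧ (p.1 ∩ p.2).Nonempty

lemma run_subset {n : ℕ} (l : List (Fin n)) (G : Finset (Finset (Fin n))) :
    runProcess G l ⊆ G := by
  induction l generalizing G with
  | nil => exact Finset.Subset.refl _
  | cons v l ih => exact (ih _).trans (Finset.filter_subset _ _)

lemma step_lemma {n : ℕ} (G : Finset (Finset (Fin n))) (v : Fin n)
    (h : 2 ≤ (G.filter fun e => v ∈ e).card) :
    G.card - (deleteVertex G v).card + (pairsSet (deleteVertex G v)).card
      ≤ (pairsSet G).card := by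
  set Gv := G.filter fun e => v ∈ e with hGv
  have hsplit : (deleteVertex G v).card + Gv.card = G.card := by
    have h := Finset.card_filter_add_card_filter_not (s := G)
      (p := fun e => v ∈ e)
    simp only [hGv, deleteVertex]
    beta_reduce at h
    omega
  set S : Finset (Finset (Fin n) × Finset (Fin n)) :=
    (Gv ×ˢ Gv).filter fun p => p.1 ≠ p.2 with hS
  -- S ⊆ pairsSet G
  have hS_sub : S ⊆ pairsSet G := by
    intro p hp
    simp only [hS, Finset.mem_filter, Finset.mem_product, hGv] at hp
    obtain ⟨⟨h1, h2⟩, hne⟩ := hp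
    refine Finset.mem_filter.mpr ⟨Finset.mem_product.mpr ⟨h1.1, h2.1⟩, hne,
      ⟨v, Finset.mem_inter.mpr ⟨h1.2, h2.2⟩⟩⟩
  have hP_sub : pairsSet (deleteVertex G v) ⊆ pairsSet G := by
    intro p hp
    simp only [pairsSet, Finset.mem_filter, Finset.mem_product, deleteVertex] at hp ⊢
    exact ⟨⟨hp.1.1.1, hp.1.2.1⟩, hp.2⟩
  have hdisj : Disjoint (pairsSet (deleteVertex G v)) S := by
    rw [Finset.disjoint_left]
    intro p hp hpS
    simp only [pairsSet, deleteVertex, Finset.mem_filter, Finset.mem_product] at hp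
    simp only [hS, hGv, Finset.mem_filter, Finset.mem_product] at hpS
    exact hp.1.1.2 hpS.1.1.2
  -- |Gv| ≤ |S| via injection
  obtain ⟨e₀, he₀, e₁, he₁, hne⟩ := Finset.one_lt_card.mp h
  have hcard : Gv.card ≤ S.card := by
    apply Finset.card_le_card_of_injOn (fun e => (e, if e = e₀ then e₁ else e₀))
    · intro e he
      simp only [Finset.mem_coe, hS, Finset.mem_filter, Finset.mem_product]
      by_cases hc : e = e₀
      · simp only [hc, if_pos rfl]
        exact ⟨⟨he₀, he₁⟩, fun hh => hne hh⟩
      · simp only [if_neg hc]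
        exact ⟨⟨he, he₀⟩, hc⟩
    · intro a _ b _ hab
      exact (Prod.mk.injEq _ _ _ _ ▸ hab).1
  have hunion : (pairsSet (deleteVertex G v)).card + S.card ≤ (pairsSet G).card := by
    rw [← Finset.card_union_of_disjoint hdisj]
    exact Finset.card_le_card (Finset.union_subset hP_sub hS_sub)
  omega

lemma main_lemma {n : ℕ} (l : List (Fin n)) (G : Finset (Finset (Fin n)))
    (hv : ValidProcess G l) :
    G.card - (runProcess G l).card ≤ (pairsSet G).card := by
  induction l generalizing G with
  | nil => simp [runProcess]
  | cons v l ih =>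
    obtain ⟨h2, hv'⟩ := hv
    have hstep := step_lemma G v h2
    have hIH := ih _ hv'
    have h1 : (runProcess (deleteVertex G v) l).card ≤ (deleteVertex G v).card :=
      Finset.card_le_card (run_subset _ _)
    have h2' : (deleteVertex G v).card ≤ G.card :=
      Finset.card_le_card (Finset.filter_subset _ _)
    show G.card - (runProcess (deleteVertex G v) l).card ≤ _
    omega

theorem stmt_14 (n R C₂ : ℕ) (G : Finset (Finset (Fin n)))
    (huniform : ∀ e ∈ G, e.card = 3)
    (hdeg : ∀ v : Fin n, (G.filter fun e => v ∈ e).card ≤ R)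
    (hC₂ : ((G ×ˢ G).filter fun p => p.1 ≠ p.2 ∧ (p.1 ∩ p.2).Nonempty).card = 2 * C₂)
    (vs : List (Fin n)) (hvalid : ValidProcess G vs)
    (hdone : ∀ v : Fin n, ((runProcess G vs).filter fun e => v ∈ e).card ≤ 1) :
    G.card - (runProcess G vs).card ≤ 2 * C₂ := by
  have := main_lemma vs G hvalid
  rwa [pairsSet, hC₂] at this
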